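/- arXiv:2312.13525 — 2 statements merged into one kernel-verified Lean document; each statement's English description precedes it below -/
import Mathlib

section
/- Let z ∈ M and I an ideal of 𝔥_{M,∗}. Then I contains AP_z if and only if the modified Pythagorean identity −w_{z,1} ∗ S_z(x)^{∗2} + C_z(x)^{∗2} = 1 holds in (𝔥_{M,∗}/I)⟦x⟧, where ∗2 denotes the square with respect to the harmonic product. -/
open scoped BigOperators

/-- `𝔥_M`: the noncommutative polynomial ring `ℚ⟨e_z : z ∈ M⟩`, realized as the
monoid algebra of the free monoid on `M` over `ℚ` (concatenation product). -/
abbrev H (M : Type*) [MonoidWithZero M] : Type _ := MonoidAlgebra ℚ (FreeMonoid M)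

variable {M : Type*} [MonoidWithZero M]

/-- The word `e_{a_1} ⋯ e_{a_k}` as an element of `𝔥_M`. -/
noncomputable def wrd (l : List M) : H M := MonoidAlgebra.single (FreeMonoid.ofList l) 1

/-- The generator `e_z`. -/
noncomputable def e (z : M) : H M := wrd [z]

/-- The harmonic product on words, defined by the recursion
`e_a w ∗ e_b w' = e_{ab}(w ∗ e_b w' + e_a w ∗ w' − e_0 (w ∗ w'))`. -/
noncomputable def har : List M → List M → H M
  | [], w => wrd w
  | a :: w, [] => wrd (a :: w)
  | a :: w, b :: w' =>
      wrd [a * b] * (har w (b :: w') + har (a :: w) w' - wrd [0] * har w w')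
termination_by w w' => w.length + w'.length
decreasing_by all_goals (simp; try omega)

/-- The harmonic product `∗` on `𝔥_M`, extended ℚ-bilinearly from words. -/
noncomputable def hmul (f g : H M) : H M :=
  Finsupp.sum f.coeff fun w a => Finsupp.sum g.coeff fun w' b =>
    (a * b) • har (FreeMonoid.toList w) (FreeMonoid.toList w')

/-- Powers with respect to the harmonic product. -/
noncomputable def hpow (a : H M) : ℕ → H M
  | 0 => 1
  | n + 1 => hmul a (hpow a n)

/-- `s_{z,k} = e_z e_0^{k-1}` (concatenation product). -/
noncomputable def s (z : M) (k : ℕ) : H M := e z * (e 0) ^ (k - 1)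

/-- `sprod z k n = s_{z^n,k} s_{z^{n-1},k} ⋯ s_{z,k}` (concatenation), `sprod z k 0 = 1`. -/
noncomputable def sprod (z : M) (k : ℕ) : ℕ → H M
  | 0 => 1
  | n + 1 => s (z ^ (n + 1)) k * sprod z k n

/-- Cauchy product of power series over `(𝔥_M, ∗)`, represented as coefficient sequences. -/
noncomputable def hmulPS (f g : ℕ → H M) : ℕ → H M :=
  fun n => ∑ i ∈ Finset.range (n + 1), hmul (f i) (g (n - i))

/-- Powers of a power series w.r.t. the harmonic product. -/
noncomputable def psPow (f : ℕ → H M) : ℕ → (ℕ → H M)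
  | 0 => fun n => if n = 0 then 1 else 0
  | m + 1 => hmulPS f (psPow f m)

/-- `exp_∗` of a power series with zero constant term (coefficientwise). -/
noncomputable def expPS (f : ℕ → H M) : ℕ → H M :=
  fun n => ∑ m ∈ Finset.range (n + 1), ((Nat.factorial m : ℚ))⁻¹ • psPow f m n

/-- Coefficients of the formal sine `S_z(x) = Σ_{n≥0} s_{z^n,2}⋯s_{z,2} x^{2n+1}`. -/
noncomputable def Scoef (z : M) (d : ℕ) : H M :=
  if d % 2 = 1 then sprod z 2 (d / 2) else 0

/-- Coefficients of the formal cosine `C_z(x) = S_z'(x)`. -/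
noncomputable def Ccoef (z : M) (d : ℕ) : H M := ((d : ℚ) + 1) • Scoef z (d + 1)

/-- `w_{z,n} = (2n+1)! s_{z^n,2} ⋯ s_{z,2}`. -/
noncomputable def wz (z : M) (n : ℕ) : H M := ((Nat.factorial (2 * n + 1) : ℚ)) • sprod z 2 n

/-- `g_{z,m,n} = w_{z,m+n} − w_{z,m} ∗ w_{z,n}`. -/
noncomputable def gz (z : M) (m n : ℕ) : H M := wz z (m + n) - hmul (wz z m) (wz z n)

/-- Coefficient of `x^i y^j` in `A_z(x,y) = S_z(x+y) − S_z(x) ∗ C_z(y) − C_z(x) ∗ S_z(y)`. -/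
noncomputable def Acoef (z : M) (i j : ℕ) : H M :=
  (Nat.choose (i + j) i : ℚ) • Scoef z (i + j)
    - hmul (Scoef z i) (Ccoef z j) - hmul (Ccoef z i) (Scoef z j)

/-- Coefficient of `x^d` in `P_z(x) = −w_{z,1} ∗ S_z(x)^{∗2} + C_z(x)^{∗2}`. -/
noncomputable def Pcoef (z : M) (d : ℕ) : H M :=
  -(hmul (wz z 1) (hmulPS (Scoef z) (Scoef z) d)) + hmulPS (Ccoef z) (Ccoef z) d


/-- Coefficients of `S^T_{z,k}(x) = Σ_{n≥0} s_{z^n,k}⋯s_{z,k} x^{(n+1)k−1}`. -/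
noncomputable def STcoef (z : M) (k : ℕ) (d : ℕ) : H M :=
  if k ∣ (d + 1) then sprod z k ((d + 1) / k - 1) else 0

/-- Coefficients of the series `Σ_{n≥1} (s_{z^n,nk}/n) x^{nk}`. -/
noncomputable def gexp (z : M) (k : ℕ) (d : ℕ) : H M :=
  if d ≠ 0 ∧ k ∣ d then (((d / k : ℕ) : ℚ))⁻¹ • s (z ^ (d / k)) d else 0

/-- Coefficients of `S^R_{z,k}(x) = x^{k−1} exp_∗(Σ_{n≥1} (s_{z^n,nk}/n) x^{nk})`. -/
noncomputable def SRcoef (z : M) (k : ℕ) (d : ℕ) : H M :=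
  if k - 1 ≤ d then expPS (gexp z k) (d - (k - 1)) else 0

/-- Admissible words spanning `𝔥^0_M = ℚ ⊕ ⨁_{a≠0,1} 𝔥_M e_a ⊕ ⨁_{a≠0,b≠1} e_a 𝔥_M e_b`. -/
def adm0 (l : List M) : Prop :=
  l = [] ∨ ∃ h : l ≠ [],
    (l.getLast h ≠ 0 ∧ l.getLast h ≠ 1) ∨ (l.head h ≠ 0 ∧ l.getLast h ≠ 1)

/-- The subspace `𝔥^0_M`. -/
noncomputable def H0 (M : Type*) [MonoidWithZero M] : Submodule ℚ (H M) :=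
  Submodule.span ℚ {x | ∃ l : List M, adm0 l ∧ x = wrd l}

/-- Words spanning `𝔥^1_M = ⨁_{m≥0} 𝔥^0_M e_1^m`. -/
def adm1 (l : List M) : Prop :=
  ∃ (l₀ : List M) (m : ℕ), adm0 l₀ ∧ l = l₀ ++ List.replicate m 1

/-- The subspace `𝔥^1_M`. -/
noncomputable def H1 (M : Type*) [MonoidWithZero M] : Submodule ℚ (H M) :=
  Submodule.span ℚ {x | ∃ l : List M, adm1 l ∧ x = wrd l}

/-- `ℓ(w)`: the number of letters `e_a` of a word with `a ≠ 0`. -/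
noncomputable def lcount (l : List M) : ℕ :=
  l.countP fun a => @decide (a ≠ 0) (Classical.propDecidable _)

/-- `ℱ_d 𝔥^0_M`: span of admissible words `w` with `ℓ(w) ≤ d`. -/
noncomputable def F0 (M : Type*) [MonoidWithZero M] (d : ℕ) : Submodule ℚ (H M) :=
  Submodule.span ℚ {x | ∃ l : List M, adm0 l ∧ lcount l ≤ d ∧ x = wrd l}

/-- The ideal of `(𝔥_M, ∗)` generated by a set. -/
noncomputable def genIdeal (S : Set (H M)) : Submodule ℚ (H M) :=
  Submodule.span ℚ {x | ∃ a y, y ∈ S ∧ x = hmul a y}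

/-- The product on the polynomial ring `𝔥_{M,∗}[S,T]` (represented as
finitely supported coefficient families indexed by monomials `S^i T^j`). -/
noncomputable def polyMul2 (f g : (ℕ × ℕ) →₀ H M) : (ℕ × ℕ) →₀ H M :=
  Finsupp.sum f fun p a => Finsupp.sum g fun q b => Finsupp.single (p + q) (hmul a b)

/-- `φ : 𝔥^0_{M,∗}[S,T] → 𝔥_{M,∗}`, `Σ w_{ij} S^i T^j ↦ Σ w_{ij} ∗ e_0^{∗i} ∗ e_1^{∗j}`. -/
noncomputable def phi2 (f : (ℕ × ℕ) →₀ H M) : H M :=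
  Finsupp.sum f fun p a => hmul a (hmul (hpow (e 0) p.1) (hpow (e 1) p.2))

/-- The product on `𝔥_{M,∗}[S]`. -/
noncomputable def polyMul1 (f g : ℕ →₀ H M) : ℕ →₀ H M :=
  Finsupp.sum f fun p a => Finsupp.sum g fun q b => Finsupp.single (p + q) (hmul a b)

/-- `φ₁ : 𝔥^1_{M,∗}[S] → 𝔥_{M,∗}`, `Σ w_i S^i ↦ Σ w_i ∗ e_0^{∗i}`. -/
noncomputable def phi1 (f : ℕ →₀ H M) : H M :=
  Finsupp.sum f fun i a => hmul a (hpow (e 0) i)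



section basics
variable {M : Type*} [MonoidWithZero M]

lemma har_nil_left (l : List M) : har [] l = wrd l := by rw [har]

lemma har_nil_right (l : List M) : har l [] = wrd l := by
  cases l with
  | nil => rw [har]
  | cons a w => rw [har]

lemma har_cons (a b : M) (w w' : List M) :
    har (a :: w) (b :: w') =
      wrd [a * b] * (har w (b :: w') + har (a :: w) w' - wrd [0] * har w w') := by
  rw [har]

lemma hmul_zero_left (g : H M) : hmul 0 g = 0 := by simp [hmul]

lemma hmul_zero_right (f : H M) : hmul f 0 = 0 := by simp [hmul]

lemma add_hmul (f g h : H M) : hmul (f + g) h = hmul f h + hmul g h := by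
  classical
  unfold hmul
  rw [MonoidAlgebra.coeff_add, Finsupp.sum_add_index]
  · intro w _; simp
  · intro w _ a b; simp [add_mul, add_smul, Finsupp.sum_add]

lemma hmul_add (f g h : H M) : hmul f (g + h) = hmul f g + hmul f h := by
  classical
  unfold hmul
  rw [← Finsupp.sum_add]
  refine Finsupp.sum_congr (fun w _ => ?_)
  rw [MonoidAlgebra.coeff_add, Finsupp.sum_add_index]
  · intro w _; simp
  · intro w _ c d; simp [mul_add, add_smul]

lemma smul_hmul (c : ℚ) (f g : H M) : hmul (c • f) g = c • hmul f g := by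
  classical
  unfold hmul
  rw [MonoidAlgebra.coeff_smul, Finsupp.sum_smul_index (by intro w; simp), Finsupp.smul_sum]
  refine Finsupp.sum_congr (fun w _ => ?_)
  rw [Finsupp.smul_sum]
  refine Finsupp.sum_congr (fun w' _ => ?_)
  rw [← mul_smul]
  congr 1; ring

lemma hmul_smul (c : ℚ) (f g : H M) : hmul f (c • g) = c • hmul f g := by
  classical
  unfold hmul
  rw [Finsupp.smul_sum]
  refine Finsupp.sum_congr (fun w a => ?_)
  rw [MonoidAlgebra.coeff_smul, Finsupp.sum_smul_index (by intro w; simp), Finsupp.smul_sum]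
  refine Finsupp.sum_congr (fun w' _ => ?_)
  rw [← mul_smul]
  congr 1; ring

lemma hmul_single_single (u v : FreeMonoid M) (a b : ℚ) :
    hmul (MonoidAlgebra.single u a) (MonoidAlgebra.single v b)
      = (a * b) • har u.toList v.toList := by
  unfold hmul
  rw [MonoidAlgebra.coeff_single, MonoidAlgebra.coeff_single]
  rw [Finsupp.sum_single_index, Finsupp.sum_single_index]
  · simp
  · simp

end basics

section words
variable {M : Type*} [MonoidWithZero M]

lemma one_eq_wrd : (1 : H M) = wrd ([] : List M) := rfl

lemma wrd_mul_wrd (l l' : List M) : wrd l * wrd l' = wrd (l ++ l' : List M) := by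
  unfold wrd
  rw [MonoidAlgebra.single_mul_single, one_mul, ← FreeMonoid.ofList_append]

lemma hmul_wrd_wrd (u v : List M) : hmul (wrd u) (wrd v) = har u v := by
  unfold wrd
  rw [hmul_single_single]
  simp

lemma hmul_one (f : H M) : hmul f 1 = f := by
  classical
  rw [one_eq_wrd]
  unfold hmul wrd
  simp only [MonoidAlgebra.coeff_single]
  have h : (Finsupp.sum f.coeff fun w a =>
      Finsupp.sum (Finsupp.single (FreeMonoid.ofList ([] : List M)) (1:ℚ)) fun w' b =>
        (a * b) • har (FreeMonoid.toList w) (FreeMonoid.toList w'))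
      = Finsupp.sum f.coeff fun w a => MonoidAlgebra.single w a := by
    refine Finsupp.sum_congr (fun w _ => ?_)
    rw [Finsupp.sum_single_index (by simp), mul_one]
    simp only [FreeMonoid.toList_ofList]
    rw [har_nil_right]
    simp [wrd]
  rw [h, MonoidAlgebra.sum_coeff_single]

lemma one_hmul (f : H M) : hmul 1 f = f := by
  classical
  rw [one_eq_wrd]
  unfold hmul wrd
  simp only [MonoidAlgebra.coeff_single]
  rw [Finsupp.sum_single_index (by simp)]
  have h : (Finsupp.sum f.coeff fun w' b =>
      ((1:ℚ) * b) • har (FreeMonoid.toList (FreeMonoid.ofList ([] : List M))) (FreeMonoid.toList w'))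
      = Finsupp.sum f.coeff fun w a => MonoidAlgebra.single w a := by
    refine Finsupp.sum_congr (fun w _ => ?_)
    rw [one_mul]
    simp only [FreeMonoid.toList_ofList]
    rw [har_nil_left]
    simp [wrd]
  rw [h, MonoidAlgebra.sum_coeff_single]

end words

section bilin
variable {M : Type*} [MonoidWithZero M]

lemma hmul_sub (f g h : H M) : hmul f (g - h) = hmul f g - hmul f h := by
  have := hmul_add f h (g - h); rw [add_sub_cancel] at this; rw [this]; abel

lemma sub_hmul (f g h : H M) : hmul (f - g) h = hmul f h - hmul g h := by
  have := add_hmul g (f - g) h; rw [add_sub_cancel] at this; rw [this]; abel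

lemma hmul_neg (f g : H M) : hmul f (-g) = -hmul f g := by
  have := hmul_sub f 0 g; simpa [hmul_zero_right] using this

lemma neg_hmul (f g : H M) : hmul (-f) g = -hmul f g := by
  have := sub_hmul 0 f g; simpa [hmul_zero_left] using this

lemma hmul_finsum {ι : Type*} (s : Finset ι) (f : H M) (g : ι → H M) :
    hmul f (∑ i ∈ s, g i) = ∑ i ∈ s, hmul f (g i) := by
  classical
  induction s using Finset.induction with
  | empty => simp [hmul_zero_right]
  | insert _ _ h ih => rw [Finset.sum_insert h, Finset.sum_insert h, hmul_add, ih]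

lemma finsum_hmul {ι : Type*} (s : Finset ι) (g : ι → H M) (f : H M) :
    hmul (∑ i ∈ s, g i) f = ∑ i ∈ s, hmul (g i) f := by
  classical
  induction s using Finset.induction with
  | empty => simp [hmul_zero_left]
  | insert _ _ h ih => rw [Finset.sum_insert h, Finset.sum_insert h, add_hmul, ih]

lemma wrd_cons (a : M) (l : List M) : wrd (a :: l) = wrd [a] * wrd l := by
  rw [wrd_mul_wrd]; rfl

/-- left cons extraction (harmonic recursion, element form in `X` and word `c :: t`) -/
lemma hmul_consL (a c : M) (t : List M) (X : H M) :
    hmul (wrd [a] * X) (wrd (c :: t)) =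
      wrd [a * c] * (hmul X (wrd (c :: t)) + hmul (wrd [a] * X) (wrd t)
        - wrd [0] * hmul X (wrd t)) := by
  induction X using MonoidAlgebra.induction_on with
  | of g =>
      have hw : (MonoidAlgebra.of ℚ (FreeMonoid M) g) = wrd g.toList := by
        simp [wrd, MonoidAlgebra.of_apply]
      rw [hw, ← wrd_cons, hmul_wrd_wrd, hmul_wrd_wrd, hmul_wrd_wrd, hmul_wrd_wrd, har_cons]
  | add f g hf hg =>
      rw [mul_add, add_hmul, hf, hg]
      simp only [add_hmul, hmul_add, mul_add, mul_sub]
      abel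
  | smul r f hf =>
      rw [mul_smul_comm, smul_hmul, hf]
      simp only [smul_hmul, mul_smul_comm]
      rw [← smul_add, ← smul_sub, mul_smul_comm]

/-- right cons extraction -/
lemma hmul_consR (a c : M) (u : List M) (Y : H M) :
    hmul (wrd (a :: u)) (wrd [c] * Y) =
      wrd [a * c] * (hmul (wrd u) (wrd [c] * Y) + hmul (wrd (a :: u)) Y
        - wrd [0] * hmul (wrd u) Y) := by
  induction Y using MonoidAlgebra.induction_on with
  | of g =>
      have hw : (MonoidAlgebra.of ℚ (FreeMonoid M) g) = wrd g.toList := by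
        simp [wrd, MonoidAlgebra.of_apply]
      rw [hw, ← wrd_cons, hmul_wrd_wrd, hmul_wrd_wrd, hmul_wrd_wrd, hmul_wrd_wrd, har_cons]
  | add f g hf hg =>
      rw [mul_add, hmul_add, hf, hg]
      simp only [add_hmul, hmul_add, mul_add, mul_sub]
      abel
  | smul r f hf =>
      rw [mul_smul_comm, hmul_smul, hf]
      simp only [hmul_smul, smul_hmul, mul_smul_comm]
      rw [← smul_add, ← smul_sub, mul_smul_comm]

end bilin

section assoc
variable {M : Type*} [MonoidWithZero M]

lemma hmul_wrd_assoc : ∀ (N : ℕ) (u v t : List M), u.length + v.length + t.length ≤ N →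
    hmul (hmul (wrd u) (wrd v)) (wrd t) = hmul (wrd u) (hmul (wrd v) (wrd t)) := by
  intro N
  induction N with
  | zero =>
      intro u v t h
      match u, v, t with
      | [], v, t => rw [← one_eq_wrd, one_hmul, one_hmul]
      | a :: p, v, t => simp at h
  | succ N ih =>
      intro u v t h
      match u, v, t with
      | [], v, t => rw [← one_eq_wrd, one_hmul, one_hmul]
      | a :: p, [], t => rw [← one_eq_wrd, hmul_one, one_hmul]
      | a :: p, b :: q, [] => rw [← one_eq_wrd, hmul_one, hmul_one]
      | a :: p, b :: q, c :: r =>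
        have hlen : p.length + (b::q).length + (c::r).length ≤ N ∧
            (a::p).length + q.length + (c::r).length ≤ N ∧
            (a::p).length + (b::q).length + r.length ≤ N ∧
            p.length + q.length + (c::r).length ≤ N ∧
            p.length + (b::q).length + r.length ≤ N ∧
            (a::p).length + q.length + r.length ≤ N ∧
            p.length + q.length + r.length ≤ N := by
          simp at h ⊢; omega
        obtain ⟨l1, l2, l3, l4, l5, l6, l7⟩ := hlen
        have h1 : hmul (wrd (a :: p)) (wrd (b :: q)) =
            wrd [a * b] * (hmul (wrd p) (wrd (b :: q)) + hmul (wrd (a :: p)) (wrd q)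
              - wrd [0] * hmul (wrd p) (wrd q)) := by
          conv_lhs => rw [wrd_cons a p]
          rw [hmul_consL a b q (wrd p), ← wrd_cons a p]
        have h2 : hmul (wrd (b :: q)) (wrd (c :: r)) =
            wrd [b * c] * (hmul (wrd q) (wrd (c :: r)) + hmul (wrd (b :: q)) (wrd r)
              - wrd [0] * hmul (wrd q) (wrd r)) := by
          conv_lhs => rw [wrd_cons b q]
          rw [hmul_consL b c r (wrd q), ← wrd_cons b q]
        -- expand LHS
        rw [h1, hmul_consL (a * b) c r _, ← h1]
        rw [h2, hmul_consR a (b * c) p _, ← h2]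
        simp only [sub_hmul, add_hmul, hmul_sub, hmul_add]
        rw [hmul_consL 0 c r (hmul (wrd p) (wrd q)), zero_mul]
        rw [hmul_consR a 0 p (hmul (wrd q) (wrd r)), mul_zero]
        -- rewrite with IHs
        rw [ih p (b :: q) (c :: r) l1, ih (a :: p) q (c :: r) l2, ih (a :: p) (b :: q) r l3,
          ih p q (c :: r) l4, ih p (b :: q) r l5, ih (a :: p) q r l6, ih p q r l7]
        rw [mul_assoc a b c]
        simp only [mul_add, mul_sub]
        abel

theorem hmul_assoc (x y t : H M) : hmul (hmul x y) t = hmul x (hmul y t) := by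
  induction x using MonoidAlgebra.induction_on with
  | of gx =>
    induction y using MonoidAlgebra.induction_on with
    | of gy =>
      induction t using MonoidAlgebra.induction_on with
      | of gt =>
          have h : ∀ g : FreeMonoid M, (MonoidAlgebra.of ℚ (FreeMonoid M) g) = wrd g.toList := by
            intro g; simp [wrd, MonoidAlgebra.of_apply]
          rw [h, h, h]
          exact hmul_wrd_assoc _ _ _ _ le_rfl
      | add f g hf hg => rw [hmul_add, hf, hg, hmul_add, hmul_add]
      | smul r f hf => rw [hmul_smul, hf, hmul_smul, hmul_smul]
    | add f g hf hg => rw [hmul_add, add_hmul, hf, hg, add_hmul, hmul_add]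
    | smul r f hf => rw [hmul_smul, smul_hmul, hf, smul_hmul, hmul_smul]
  | add f g hf hg => rw [add_hmul, add_hmul, add_hmul, hf, hg]
  | smul r f hf => rw [smul_hmul, smul_hmul, smul_hmul, hf]

end assoc

section comm
variable {M : Type*} [MonoidWithZero M]

lemma har_comm : ∀ (N : ℕ) (u v : List M), u.length + v.length ≤ N →
    (∀ a ∈ u, ∀ b ∈ v, a * b = b * a) → har u v = har v u := by
  intro N
  induction N with
  | zero =>
      intro u v h _
      match u, v with
      | [], v => rw [har_nil_left, har_nil_right]
      | a :: p, v => simp only [List.length_cons] at h; omega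
  | succ N ih =>
      intro u v h hc
      match u, v with
      | [], v => rw [har_nil_left, har_nil_right]
      | a :: p, [] => rw [har_nil_left, har_nil_right]
      | a :: p, b :: q =>
        rw [har_cons, har_cons]
        rw [hc a (by simp) b (by simp)]
        rw [ih p (b :: q) (by simp only [List.length_cons] at h ⊢; omega)
            (fun x hx y hy => hc x (by simp [hx]) y hy),
          ih (a :: p) q (by simp only [List.length_cons] at h ⊢; omega)
            (fun x hx y hy => hc x hx y (by simp [hy])),
          ih p q (by simp only [List.length_cons] at h; omega)
            (fun x hx y hy => hc x (by simp [hx]) y (by simp [hy]))]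
        congr 1
        abel

/-- letters allowed: 0 and powers of z -/
def Sz (z : M) (a : M) : Prop := a = 0 ∨ ∃ n : ℕ, a = z ^ n

lemma Sz_zero (z : M) : Sz z 0 := Or.inl rfl

lemma Sz_pow (z : M) (n : ℕ) : Sz z (z ^ n) := Or.inr ⟨n, rfl⟩

lemma Sz_mul {z a b : M} (ha : Sz z a) (hb : Sz z b) : Sz z (a * b) := by
  rcases ha with rfl | ⟨m, rfl⟩
  · exact Or.inl (zero_mul _)
  rcases hb with rfl | ⟨n, rfl⟩
  · exact Or.inl (mul_zero _)
  · exact Or.inr ⟨m + n, (pow_add z m n).symm⟩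

lemma Sz_comm {z a b : M} (ha : Sz z a) (hb : Sz z b) : a * b = b * a := by
  rcases ha with rfl | ⟨m, rfl⟩
  · rcases hb with rfl | ⟨n, rfl⟩ <;> simp
  rcases hb with rfl | ⟨n, rfl⟩
  · simp
  · rw [← pow_add, ← pow_add, Nat.add_comm]

/-- the span of words with letters 0 or powers of z -/
noncomputable def PW (z : M) : Submodule ℚ (H M) :=
  Submodule.span ℚ {x : H M | ∃ l : List M, (∀ a ∈ l, Sz z a) ∧ x = wrd l}

lemma wrd_mem_PW {z : M} {l : List M} (hl : ∀ a ∈ l, Sz z a) : wrd l ∈ PW z :=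
  Submodule.subset_span ⟨l, hl, rfl⟩

lemma hmul_comm_PW {z : M} {x y : H M} (hx : x ∈ PW z) (hy : y ∈ PW z) :
    hmul x y = hmul y x := by
  induction hx using Submodule.span_induction with
  | mem u hu =>
      induction hy using Submodule.span_induction with
      | mem v hv =>
          obtain ⟨lu, hlu, rfl⟩ := hu
          obtain ⟨lv, hlv, rfl⟩ := hv
          rw [hmul_wrd_wrd, hmul_wrd_wrd]
          exact har_comm _ _ _ le_rfl (fun a ha b hb => Sz_comm (hlu a ha) (hlv b hb))
      | zero => rw [hmul_zero_left, hmul_zero_right]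
      | add f g hf hg h1 h2 => rw [hmul_add, add_hmul, h1, h2]
      | smul r f hf h1 => rw [hmul_smul, smul_hmul, h1]
  | zero => rw [hmul_zero_left, hmul_zero_right]
  | add f g hf hg h1 h2 => rw [add_hmul, hmul_add, h1, h2]
  | smul r f hf h1 => rw [smul_hmul, hmul_smul, h1]

lemma mul_wrd_mem_PW {z s : M} (hs : Sz z s) {x : H M} (hx : x ∈ PW z) :
    wrd [s] * x ∈ PW z := by
  induction hx using Submodule.span_induction with
  | mem u hu =>
      obtain ⟨l, hl, rfl⟩ := hu
      rw [← wrd_cons]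
      refine wrd_mem_PW (fun a ha => ?_)
      rcases List.mem_cons.mp ha with rfl | h
      · exact hs
      · exact hl a h
  | zero => rw [mul_zero]; exact Submodule.zero_mem _
  | add f g hf hg h1 h2 => rw [mul_add]; exact Submodule.add_mem _ h1 h2
  | smul r f hf h1 => rw [mul_smul_comm]; exact Submodule.smul_mem _ _ h1

lemma har_mem_PW {z : M} : ∀ (N : ℕ) (u v : List M), u.length + v.length ≤ N →
    (∀ a ∈ u, Sz z a) → (∀ a ∈ v, Sz z a) → har u v ∈ PW z := by
  intro N
  induction N with
  | zero =>
      intro u v h hu hv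
      match u, v with
      | [], v => rw [har_nil_left]; exact wrd_mem_PW hv
      | a :: p, v => simp only [List.length_cons] at h; omega
  | succ N ih =>
      intro u v h hu hv
      match u, v with
      | [], v => rw [har_nil_left]; exact wrd_mem_PW hv
      | a :: p, [] => rw [har_nil_right]; exact wrd_mem_PW hu
      | a :: p, b :: q =>
        rw [har_cons]
        have hp : ∀ x ∈ p, Sz z x := fun x hx => hu x (by simp [hx])
        have hq : ∀ x ∈ q, Sz z x := fun x hx => hv x (by simp [hx])
        refine mul_wrd_mem_PW (Sz_mul (hu a (by simp)) (hv b (by simp))) ?_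
        refine Submodule.sub_mem _ (Submodule.add_mem _ ?_ ?_) ?_
        · exact ih p (b :: q) (by simp only [List.length_cons] at h ⊢; omega) hp hv
        · exact ih (a :: p) q (by simp only [List.length_cons] at h ⊢; omega) hu hq
        · exact mul_wrd_mem_PW (Sz_zero z)
            (ih p q (by simp only [List.length_cons] at h; omega) hp hq)

lemma hmul_mem_PW {z : M} {x y : H M} (hx : x ∈ PW z) (hy : y ∈ PW z) :
    hmul x y ∈ PW z := by
  induction hx using Submodule.span_induction with
  | mem u hu =>
      induction hy using Submodule.span_induction with
      | mem v hv =>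
          obtain ⟨lu, hlu, rfl⟩ := hu
          obtain ⟨lv, hlv, rfl⟩ := hv
          rw [hmul_wrd_wrd]
          exact har_mem_PW _ _ _ le_rfl hlu hlv
      | zero => rw [hmul_zero_right]; exact Submodule.zero_mem _
      | add f g hf hg h1 h2 => rw [hmul_add]; exact Submodule.add_mem _ h1 h2
      | smul r f hf h1 => rw [hmul_smul]; exact Submodule.smul_mem _ _ h1
  | zero => rw [hmul_zero_left]; exact Submodule.zero_mem _
  | add f g hf hg h1 h2 => rw [add_hmul]; exact Submodule.add_mem _ h1 h2
  | smul r f hf h1 => rw [smul_hmul]; exact Submodule.smul_mem _ _ h1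

end comm

section zlayer
variable {M : Type*} [MonoidWithZero M]

/-- the word underlying `sprod z 2 n` -/
def zl (z : M) : ℕ → List M
  | 0 => []
  | n + 1 => z ^ (n + 1) :: 0 :: zl z n

lemma sprod_eq_wrd (z : M) (n : ℕ) : sprod z 2 n = wrd (zl z n) := by
  induction n with
  | zero => rfl
  | succ n ih =>
      show s (z ^ (n+1)) 2 * sprod z 2 n = _
      rw [ih]
      show e (z ^ (n+1)) * e 0 ^ (2 - 1) * wrd (zl z n) = _
      rw [pow_one]
      unfold e
      rw [wrd_mul_wrd, wrd_mul_wrd]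
      rfl

lemma zl_letters (z : M) (n : ℕ) : ∀ a ∈ zl z n, Sz z a := by
  induction n with
  | zero => intro a ha; simp [zl] at ha
  | succ n ih =>
      intro a ha
      rcases List.mem_cons.mp ha with rfl | ha'
      · exact Sz_pow z (n+1)
      rcases List.mem_cons.mp ha' with rfl | ha''
      · exact Sz_zero z
      · exact ih a ha''

lemma sprod_mem_PW (z : M) (n : ℕ) : sprod z 2 n ∈ PW z := by
  rw [sprod_eq_wrd]; exact wrd_mem_PW (zl_letters z n)

lemma wz_mem_PW (z : M) (n : ℕ) : wz z n ∈ PW z :=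
  Submodule.smul_mem _ _ (sprod_mem_PW z n)

lemma wz_zero (z : M) : wz z 0 = 1 := by
  unfold wz
  show ((Nat.factorial 1 : ℚ)) • sprod z 2 0 = 1
  rw [Nat.factorial_one]
  show (1:ℚ) • (1 : H M) = 1
  simp

lemma gz_left_zero (z : M) (n : ℕ) : gz z 0 n = 0 := by
  unfold gz
  rw [wz_zero, one_hmul, zero_add, sub_self]

lemma gz_right_zero (z : M) (m : ℕ) : gz z m 0 = 0 := by
  unfold gz
  rw [wz_zero, hmul_one, add_zero, sub_self]

/-- the key commuted/associated identity behind the reduction -/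
lemma gz_succ (z : M) (a b : ℕ) :
    gz z (a + 1) b = gz z 1 (a + b) + hmul (wz z 1) (gz z a b) - hmul (wz z b) (gz z 1 a) := by
  unfold gz
  rw [hmul_sub, hmul_sub]
  have c1 : hmul (wz z b) (hmul (wz z 1) (wz z a)) = hmul (wz z 1) (hmul (wz z a) (wz z b)) := by
    rw [hmul_comm_PW (wz_mem_PW z b) (hmul_mem_PW (wz_mem_PW z 1) (wz_mem_PW z a)), hmul_assoc]
  have c2 : hmul (wz z b) (wz z (1 + a)) = hmul (wz z (1 + a)) (wz z b) :=
    hmul_comm_PW (wz_mem_PW z b) (wz_mem_PW z (1 + a))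
  rw [c1, c2]
  have e1 : 1 + (a + b) = a + 1 + b := by omega
  have e2 : 1 + a = a + 1 := by omega
  rw [e1, e2]
  abel

end zlayer

section reduction
variable {M : Type*} [MonoidWithZero M]

variable {z : M} {I : Submodule ℚ (H M)}

lemma gz_mem_of_g1 (hI : ∀ a b : H M, b ∈ I → hmul a b ∈ I) {n : ℕ}
    (h1 : ∀ l, l < n → gz z 1 l ∈ I) :
    ∀ a b, a + b ≤ n → gz z a b ∈ I := by
  intro a
  induction a with
  | zero => intro b _; rw [gz_left_zero]; exact Submodule.zero_mem _
  | succ a iha =>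
      intro b hab
      rw [gz_succ]
      refine Submodule.sub_mem _ (Submodule.add_mem _ ?_ ?_) ?_
      · exact h1 (a + b) (by omega)
      · exact hI _ _ (iha b (by omega))
      · exact hI _ _ (h1 a (by omega))

lemma gz_same_level (hI : ∀ a b : H M, b ∈ I → hmul a b ∈ I) {n : ℕ}
    (h1 : ∀ l, l < n → gz z 1 l ∈ I) {a b : ℕ} (hb : 1 ≤ b) (hab : a + b = n) :
    gz z (a + 1) b - gz z 1 n ∈ I := by
  rw [gz_succ, hab]
  have : gz z 1 n + hmul (wz z 1) (gz z a b) - hmul (wz z b) (gz z 1 a) - gz z 1 n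
      = hmul (wz z 1) (gz z a b) - hmul (wz z b) (gz z 1 a) := by abel
  rw [this]
  refine Submodule.sub_mem _ ?_ ?_
  · exact hI _ _ (gz_mem_of_g1 hI h1 a b (by omega))
  · exact hI _ _ (h1 a (by omega))

end reduction

section coeffs
variable {M : Type*} [MonoidWithZero M]

lemma Scoef_even (z : M) {i : ℕ} (h : i % 2 = 0) : Scoef z i = 0 := by
  unfold Scoef; rw [if_neg (by omega)]

lemma Scoef_odd (z : M) {i : ℕ} (h : i % 2 = 1) : Scoef z i = sprod z 2 (i / 2) := by
  unfold Scoef; rw [if_pos h]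

lemma Ccoef_even (z : M) (a : ℕ) : Ccoef z (2 * a) = ((2 * a + 1 : ℕ) : ℚ) • sprod z 2 a := by
  unfold Ccoef
  rw [Scoef_odd z (by omega)]
  have : (2 * a + 1) / 2 = a := by omega
  rw [this]
  push_cast
  ring_nf

lemma Ccoef_odd (z : M) (a : ℕ) : Ccoef z (2 * a + 1) = 0 := by
  unfold Ccoef
  rw [Scoef_even z (by omega), smul_zero]

lemma Ccoef_odd' (z : M) {i : ℕ} (h : i % 2 = 1) : Ccoef z i = 0 := by
  obtain ⟨a, rfl⟩ : ∃ a, i = 2 * a + 1 := ⟨i / 2, by omega⟩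
  exact Ccoef_odd z a

lemma SS_odd (z : M) (k : ℕ) : hmulPS (Scoef z) (Scoef z) (2 * k + 1) = 0 := by
  unfold hmulPS
  refine Finset.sum_eq_zero (fun i hi => ?_)
  simp only [Finset.mem_range] at hi
  rcases Nat.even_or_odd i with he | ho
  · rw [Scoef_even z (Nat.even_iff.mp he), hmul_zero_left]
  · have h2 : i % 2 = 1 := Nat.odd_iff.mp ho
    rw [Scoef_even z (M := M) (i := 2 * k + 1 - i) (by omega), hmul_zero_right]

lemma CC_odd (z : M) (k : ℕ) : hmulPS (Ccoef z) (Ccoef z) (2 * k + 1) = 0 := by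
  unfold hmulPS
  refine Finset.sum_eq_zero (fun i hi => ?_)
  simp only [Finset.mem_range] at hi
  rcases Nat.even_or_odd i with he | ho
  · have h2 : i % 2 = 0 := Nat.even_iff.mp he
    rw [Ccoef_odd' z (M := M) (i := 2 * k + 1 - i) (by omega), hmul_zero_right]
  · rw [Ccoef_odd' z (Nat.odd_iff.mp ho), hmul_zero_left]

lemma Pcoef_odd (z : M) (k : ℕ) : Pcoef z (2 * k + 1) = 0 := by
  unfold Pcoef
  rw [SS_odd, CC_odd, hmul_zero_right]
  simp

/-- even/odd split of a sum over `range (2k+1)` -/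
lemma range_odd_even_split {β : Type*} [AddCommMonoid β] (f : ℕ → β) (k : ℕ) :
    ∑ i ∈ Finset.range (2 * k + 1), f i
      = (∑ a ∈ Finset.range (k + 1), f (2 * a)) + ∑ a ∈ Finset.range k, f (2 * a + 1) := by
  induction k with
  | zero => simp
  | succ k ih =>
      have h1 : 2 * (k + 1) + 1 = (2 * k + 1) + 1 + 1 := by omega
      rw [h1, Finset.sum_range_succ, Finset.sum_range_succ, ih,
        Finset.sum_range_succ (fun a => f (2 * a)) (k + 1),
        Finset.sum_range_succ (fun a => f (2 * a + 1)) k]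
      have e1 : 2 * (k + 1) = 2 * k + 1 + 1 := by omega
      rw [e1]
      abel

end coeffs

section expansion
variable {M : Type*} [MonoidWithZero M]

def Fq (m : ℕ) : ℚ := (Nat.factorial m : ℚ)

lemma Fq_ne (m : ℕ) : Fq m ≠ 0 := by
  unfold Fq; exact_mod_cast Nat.factorial_ne_zero m

def Qc (k a : ℕ) : ℚ := (Fq (2 * a))⁻¹ * (Fq (2 * (k - a)))⁻¹
def Rc (k a : ℕ) : ℚ := (Fq (2 * a + 1))⁻¹ * (Fq (2 * (k - 1 - a) + 1))⁻¹

lemma sprod_eq_smul_wz (z : M) (a : ℕ) : sprod z 2 a = (Fq (2 * a + 1))⁻¹ • wz z a := by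
  unfold wz
  rw [smul_smul]
  have h : (Fq (2 * a + 1))⁻¹ * ((2 * a + 1).factorial : ℚ) = 1 :=
    inv_mul_cancel₀ (Fq_ne (2 * a + 1))
  rw [h, one_smul]

lemma hmul_wz_wz (z : M) (a b : ℕ) :
    hmul (wz z a) (wz z b) = wz z (a + b) - gz z a b := by
  unfold gz; abel

lemma hmul_sprod_sprod (z : M) (a b : ℕ) :
    hmul (sprod z 2 a) (sprod z 2 b)
      = ((Fq (2 * a + 1))⁻¹ * (Fq (2 * b + 1))⁻¹) • (wz z (a + b) - gz z a b) := by
  rw [sprod_eq_smul_wz, sprod_eq_smul_wz, smul_hmul, hmul_smul, hmul_wz_wz, smul_smul]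

lemma Fq_succ_inv (m : ℕ) : ((m + 1 : ℕ) : ℚ) * (Fq (m + 1))⁻¹ = (Fq m)⁻¹ := by
  unfold Fq
  rw [Nat.factorial_succ]
  push_cast
  rw [mul_inv]
  rw [← mul_assoc, mul_inv_cancel₀ (by exact_mod_cast Nat.succ_ne_zero m), one_mul]

lemma SS_even (z : M) (k : ℕ) :
    hmulPS (Scoef z) (Scoef z) (2 * k)
      = ∑ a ∈ Finset.range k, Rc k a • (wz z (k - 1) - gz z a (k - 1 - a)) := by
  unfold hmulPS
  rw [range_odd_even_split (fun i => hmul (Scoef z i) (Scoef z (2 * k - i))) k]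
  have hz : ∑ a ∈ Finset.range (k + 1), hmul (Scoef z (2 * a)) (Scoef z (2 * k - 2 * a)) = 0 :=
    Finset.sum_eq_zero (fun a _ => by rw [Scoef_even z (by omega), hmul_zero_left])
  rw [hz, zero_add]
  refine Finset.sum_congr rfl (fun a ha => ?_)
  simp only [Finset.mem_range] at ha
  have e1 : 2 * k - (2 * a + 1) = 2 * (k - 1 - a) + 1 := by omega
  rw [e1, Scoef_odd z (by omega), Scoef_odd z (by omega)]
  have d1 : (2 * a + 1) / 2 = a := by omega
  have d2 : (2 * (k - 1 - a) + 1) / 2 = k - 1 - a := by omega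
  rw [d1, d2, hmul_sprod_sprod]
  have e2 : a + (k - 1 - a) = k - 1 := by omega
  rw [e2]
  rfl

lemma CC_even (z : M) (k : ℕ) :
    hmulPS (Ccoef z) (Ccoef z) (2 * k)
      = ∑ a ∈ Finset.range (k + 1), Qc k a • (wz z k - gz z a (k - a)) := by
  unfold hmulPS
  rw [range_odd_even_split (fun i => hmul (Ccoef z i) (Ccoef z (2 * k - i))) k]
  have hz : ∑ a ∈ Finset.range k, hmul (Ccoef z (2 * a + 1)) (Ccoef z (2 * k - (2 * a + 1))) = 0 :=
    Finset.sum_eq_zero (fun a _ => by rw [Ccoef_odd, hmul_zero_left])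
  rw [hz, add_zero]
  refine Finset.sum_congr rfl (fun a ha => ?_)
  simp only [Finset.mem_range] at ha
  have e1 : 2 * k - 2 * a = 2 * (k - a) := by omega
  rw [e1, Ccoef_even, Ccoef_even, smul_hmul, hmul_smul, smul_smul, hmul_sprod_sprod]
  have e2 : a + (k - a) = k := by omega
  rw [e2, smul_smul]
  congr 1
  show ((2*a+1 : ℕ) : ℚ) * ((2*(k-a)+1 : ℕ) : ℚ) * ((Fq (2 * a + 1))⁻¹ * (Fq (2 * (k-a) + 1))⁻¹)
      = Qc k a
  unfold Qc
  rw [show (2*a+1) = (2*a)+1 from rfl, show (2*(k-a)+1) = (2*(k-a))+1 from rfl]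
  calc ((2*a+1 : ℕ) : ℚ) * ((2*(k-a)+1 : ℕ) : ℚ) * ((Fq (2*a+1))⁻¹ * (Fq (2*(k-a)+1))⁻¹)
      = (((2*a)+1 : ℕ) : ℚ) * (Fq ((2*a)+1))⁻¹ * ((((2*(k-a))+1 : ℕ) : ℚ) * (Fq ((2*(k-a))+1))⁻¹) := by
        ring
    _ = (Fq (2*a))⁻¹ * (Fq (2*(k-a)))⁻¹ := by rw [Fq_succ_inv, Fq_succ_inv]

lemma Pcoef_even (z : M) (k : ℕ) :
    Pcoef z (2 * k)
      = ((∑ a ∈ Finset.range (k + 1), Qc k a) - ∑ a ∈ Finset.range k, Rc k a) • wz z k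
        - (∑ a ∈ Finset.range (k + 1), Qc k a • gz z a (k - a))
        + ∑ a ∈ Finset.range k,
            Rc k a • (gz z 1 (k - 1) + hmul (wz z 1) (gz z a (k - 1 - a))) := by
  unfold Pcoef
  rw [SS_even, CC_even, hmul_finsum]
  have h1 : ∀ a ∈ Finset.range k,
      hmul (wz z 1) (Rc k a • (wz z (k - 1) - gz z a (k - 1 - a)))
        = Rc k a • wz z k - Rc k a • (gz z 1 (k - 1) + hmul (wz z 1) (gz z a (k - 1 - a))) := by
    intro a ha
    simp only [Finset.mem_range] at ha
    rw [hmul_smul, hmul_sub]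
    have hw : hmul (wz z 1) (wz z (k - 1)) = wz z k - gz z 1 (k - 1) := by
      rw [hmul_wz_wz, show 1 + (k - 1) = k by omega]
    rw [hw, ← smul_sub]
    congr 1
    abel
  rw [Finset.sum_congr rfl h1]
  have h2 : ∑ a ∈ Finset.range (k + 1), Qc k a • (wz z k - gz z a (k - a))
      = (∑ a ∈ Finset.range (k + 1), Qc k a) • wz z k
        - ∑ a ∈ Finset.range (k + 1), Qc k a • gz z a (k - a) := by
    rw [Finset.sum_smul, ← Finset.sum_sub_distrib]
    exact Finset.sum_congr rfl (fun a _ => smul_sub _ _ _)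
  have h3 : ∑ a ∈ Finset.range k,
      (Rc k a • wz z k - Rc k a • (gz z 1 (k - 1) + hmul (wz z 1) (gz z a (k - 1 - a))))
      = (∑ a ∈ Finset.range k, Rc k a) • wz z k
        - ∑ a ∈ Finset.range k,
            Rc k a • (gz z 1 (k - 1) + hmul (wz z 1) (gz z a (k - 1 - a))) := by
    rw [Finset.sum_smul, ← Finset.sum_sub_distrib]
  rw [h2, h3, sub_smul]
  abel

end expansion

section scalars

lemma EO {k : ℕ} (hk : 1 ≤ k) :
    ∑ a ∈ Finset.range (k + 1), Qc k a = ∑ a ∈ Finset.range k, Rc k a := by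
  have key : ∑ j ∈ Finset.range (2 * k + 1),
      ((-1 : ℚ)) ^ j * ((Fq j)⁻¹ * (Fq (2 * k - j))⁻¹) = 0 := by
    have h1 : ∀ j ∈ Finset.range (2 * k + 1),
        ((-1 : ℚ)) ^ j * ((Fq j)⁻¹ * (Fq (2 * k - j))⁻¹)
          = (Fq (2 * k))⁻¹ * (((-1 : ℚ)) ^ j * ((2 * k).choose j : ℚ)) := by
      intro j hj
      simp only [Finset.mem_range] at hj
      have hle : j ≤ 2 * k := by omega
      have hcf : (((2 * k).choose j : ℚ)) * Fq j * Fq (2 * k - j) = Fq (2 * k) := by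
        unfold Fq
        exact_mod_cast Nat.choose_mul_factorial_mul_factorial hle
      have h3 : (Fq j)⁻¹ * (Fq (2 * k - j))⁻¹ = (Fq (2 * k))⁻¹ * ((2 * k).choose j : ℚ) := by
        have c0 : (((2 * k).choose j : ℚ)) ≠ 0 := by
          have := Nat.choose_pos hle
          positivity
        apply mul_left_cancel₀ (Fq_ne (2 * k))
        rw [← mul_assoc (Fq (2 * k)) (Fq (2 * k))⁻¹, mul_inv_cancel₀ (Fq_ne (2 * k)), one_mul,
          ← hcf]
        rw [mul_assoc (((2 * k).choose j : ℚ) * Fq j),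
          show Fq (2 * k - j) * ((Fq j)⁻¹ * (Fq (2 * k - j))⁻¹) = (Fq j)⁻¹ from by
            rw [mul_comm (Fq j)⁻¹, ← mul_assoc, mul_inv_cancel₀ (Fq_ne (2 * k - j)), one_mul],
          mul_assoc, mul_inv_cancel₀ (Fq_ne j), mul_one]
      rw [h3]; ring
    rw [Finset.sum_congr rfl h1, ← Finset.mul_sum]
    have h4 : ∑ j ∈ Finset.range (2 * k + 1), ((-1 : ℚ)) ^ j * ((2 * k).choose j : ℚ) = 0 := by
      have h5 := Int.alternating_sum_range_choose_of_ne (n := 2 * k) (by omega)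
      exact_mod_cast h5
    rw [h4, mul_zero]
  rw [range_odd_even_split (fun j => ((-1 : ℚ)) ^ j * ((Fq j)⁻¹ * (Fq (2 * k - j))⁻¹)) k] at key
  have he : ∑ a ∈ Finset.range (k + 1),
      ((-1 : ℚ)) ^ (2 * a) * ((Fq (2 * a))⁻¹ * (Fq (2 * k - 2 * a))⁻¹)
        = ∑ a ∈ Finset.range (k + 1), Qc k a := by
    refine Finset.sum_congr rfl (fun a ha => ?_)
    simp only [Finset.mem_range] at ha
    rw [pow_mul, neg_one_sq, one_pow, one_mul, show 2 * k - 2 * a = 2 * (k - a) by omega]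
    rfl
  have ho : ∑ a ∈ Finset.range k,
      ((-1 : ℚ)) ^ (2 * a + 1) * ((Fq (2 * a + 1))⁻¹ * (Fq (2 * k - (2 * a + 1)))⁻¹)
        = - ∑ a ∈ Finset.range k, Rc k a := by
    rw [← Finset.sum_neg_distrib]
    refine Finset.sum_congr rfl (fun a ha => ?_)
    simp only [Finset.mem_range] at ha
    rw [pow_succ, pow_mul, neg_one_sq, one_pow, one_mul,
      show 2 * k - (2 * a + 1) = 2 * (k - 1 - a) + 1 by omega]
    unfold Rc
    ring
  rw [he, ho] at key
  linarith

lemma sum_Qif {k : ℕ} (hk : 1 ≤ k) :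
    ∑ a ∈ Finset.range (k + 1), (if a = 0 ∨ a = k then 0 else Qc k a)
      = (∑ a ∈ Finset.range (k + 1), Qc k a) - Qc k 0 - Qc k k := by
  obtain ⟨m, rfl⟩ : ∃ m, k = m + 1 := ⟨k - 1, by omega⟩
  rw [Finset.sum_range_succ', Finset.sum_range_succ' (fun a => Qc (m + 1) a) (m + 1)]
  rw [Finset.sum_range_succ, Finset.sum_range_succ (fun i => Qc (m + 1) (i + 1)) m]
  have h0 : (if (0 : ℕ) = 0 ∨ (0 : ℕ) = m + 1 then (0:ℚ) else Qc (m+1) 0) = 0 := by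
    rw [if_pos (Or.inl rfl)]
  have ht : (if m + 1 = 0 ∨ m + 1 = m + 1 then (0:ℚ) else Qc (m+1) (m+1)) = 0 := by
    rw [if_pos (Or.inr rfl)]
  rw [h0, ht]
  have hm : ∀ i ∈ Finset.range m,
      (if i + 1 = 0 ∨ i + 1 = m + 1 then (0:ℚ) else Qc (m+1) (i+1)) = Qc (m+1) (i+1) := by
    intro i hi
    simp only [Finset.mem_range] at hi
    rw [if_neg (by omega)]
  rw [Finset.sum_congr rfl hm]
  ring

lemma Qc_end (k : ℕ) : Qc k 0 = (Fq (2 * k))⁻¹ ∧ Qc k k = (Fq (2 * k))⁻¹ := by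
  constructor
  · unfold Qc
    rw [Nat.mul_zero, Nat.sub_zero]
    show (Fq 0)⁻¹ * (Fq (2 * k))⁻¹ = _
    unfold Fq
    rw [Nat.factorial_zero]
    norm_num
  · unfold Qc
    rw [Nat.sub_self, Nat.mul_zero]
    show (Fq (2 * k))⁻¹ * (Fq 0)⁻¹ = _
    unfold Fq
    rw [Nat.factorial_zero]
    norm_num

end scalars

section pzero
variable {M : Type*} [MonoidWithZero M]

lemma Pcoef_zero_eq (z : M) : Pcoef z 0 = 1 := by
  unfold Pcoef hmulPS
  rw [Finset.sum_range_one, Finset.sum_range_one]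
  rw [Scoef_even z (by norm_num), hmul_zero_left, hmul_zero_right]
  have hc : Ccoef z 0 = 1 := by
    unfold Ccoef
    rw [Scoef_odd z (by norm_num)]
    norm_num
    rfl
  rw [hc, one_hmul]
  simp

end pzero

/-- Theorem 4.1: an ideal `I` of `𝔥_{M,∗}` is `AP_z`-ample iff the modified Pythagorean
identity `−w_{z,1} ∗ S_z(x)^{∗2} + C_z(x)^{∗2} = 1` holds in `(𝔥_{M,∗}/I)⟦x⟧`. -/
theorem pythagorean_iff_ample (M : Type*) [MonoidWithZero M] (z : M)
    (I : Submodule ℚ (H M)) (hI : ∀ a b : H M, b ∈ I → hmul a b ∈ I) :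
    genIdeal {x : H M | ∃ m n : ℕ, x = gz z m n} ≤ I ↔
      ∀ d : ℕ, Pcoef z d - (if d = 0 then (1 : H M) else 0) ∈ I := by
  constructor
  · intro hAP d
    have hg : ∀ m n : ℕ, gz z m n ∈ I := by
      intro m n
      refine hAP (Submodule.subset_span ?_)
      exact ⟨1, gz z m n, ⟨m, n, rfl⟩, (one_hmul _).symm⟩
    rcases Nat.even_or_odd d with he | ho
    · obtain ⟨k, rfl⟩ : ∃ k, d = 2 * k := ⟨d / 2, by have := Nat.even_iff.mp he; omega⟩
      by_cases hk : k = 0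
      · subst hk
        rw [if_pos (by norm_num), show 2 * 0 = 0 from rfl, Pcoef_zero_eq, sub_self]
        exact Submodule.zero_mem _
      · rw [if_neg (by omega), sub_zero, Pcoef_even, EO (by omega), sub_self, zero_smul]
        rw [zero_sub]
        refine Submodule.add_mem _ (Submodule.neg_mem _ ?_) ?_
        · exact Submodule.sum_mem _ (fun a _ => Submodule.smul_mem _ _ (hg a (k - a)))
        · refine Submodule.sum_mem _ (fun a _ => Submodule.smul_mem _ _ ?_)
          exact Submodule.add_mem _ (hg 1 (k - 1)) (hI _ _ (hg a (k - 1 - a)))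
    · obtain ⟨k, rfl⟩ := ho
      rw [Pcoef_odd, if_neg (by omega), sub_zero]
      exact Submodule.zero_mem _
  · intro hP
    have hg1 : ∀ n, gz z 1 n ∈ I := by
      intro n
      induction n using Nat.strong_induction_on with
      | _ n ih =>
        set k := n + 1 with hkdef
        have hp := hP (2 * k)
        rw [if_neg (by omega), sub_zero, Pcoef_even, EO (by omega), sub_self, zero_smul,
          zero_sub] at hp
        simp only [hkdef, Nat.add_sub_cancel] at hp
        -- hp : -(∑ a ∈ range (n+2), Qc (n+1) a • gz z a (n+1-a))
        --        + ∑ a ∈ range (n+1), Rc (n+1) a • (gz z 1 n + hmul (wz z 1) (gz z a (n-a))) ∈ I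
        set q : ℚ := ∑ a ∈ Finset.range (k + 1), (if a = 0 ∨ a = k then 0 else Qc k a) with hq
        set r : ℚ := ∑ a ∈ Finset.range k, Rc k a with hr
        have hA : (∑ a ∈ Finset.range (k + 1), Qc k a • gz z a (k - a)) - q • gz z 1 n ∈ I := by
          rw [hq, Finset.sum_smul, ← Finset.sum_sub_distrib]
          refine Submodule.sum_mem _ (fun a ha => ?_)
          simp only [Finset.mem_range] at ha
          by_cases h0 : a = 0
          · subst h0
            rw [gz_left_zero, smul_zero, if_pos (Or.inl rfl), zero_smul, sub_zero]
            exact Submodule.zero_mem _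
          by_cases hk0 : a = k
          · subst hk0
            rw [Nat.sub_self, gz_right_zero, smul_zero, if_pos (Or.inr rfl), zero_smul, sub_zero]
            exact Submodule.zero_mem _
          · rw [if_neg (by tauto), ← smul_sub]
            refine Submodule.smul_mem _ _ ?_
            obtain ⟨a', rfl⟩ : ∃ a', a = a' + 1 := ⟨a - 1, by omega⟩
            exact gz_same_level hI (fun l hl => ih l hl) (by omega) (by omega)
        have hB : (∑ a ∈ Finset.range k,
            Rc k a • (gz z 1 n + hmul (wz z 1) (gz z a (n - a)))) - r • gz z 1 n ∈ I := by
          rw [hr, Finset.sum_smul, ← Finset.sum_sub_distrib]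
          refine Submodule.sum_mem _ (fun a ha => ?_)
          simp only [Finset.mem_range] at ha
          rw [smul_add, add_sub_cancel_left]
          refine Submodule.smul_mem _ _ (hI _ _ ?_)
          exact gz_mem_of_g1 hI (fun l hl => ih l hl) a (n - a) (by omega)
        have hcomb : (r - q) • gz z 1 n
            = (-(∑ a ∈ Finset.range (k + 1), Qc k a • gz z a (k - a))
                + ∑ a ∈ Finset.range k, Rc k a • (gz z 1 n + hmul (wz z 1) (gz z a (n - a))))
              + ((∑ a ∈ Finset.range (k + 1), Qc k a • gz z a (k - a)) - q • gz z 1 n)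
              - ((∑ a ∈ Finset.range k,
                  Rc k a • (gz z 1 n + hmul (wz z 1) (gz z a (n - a)))) - r • gz z 1 n) := by
          rw [sub_smul]
          abel
        have hmem : (r - q) • gz z 1 n ∈ I := by
          rw [hcomb]
          exact Submodule.sub_mem _ (Submodule.add_mem _ hp hA) hB
        have hrq : r - q = 2 * (Fq (2 * k))⁻¹ := by
          rw [hq, hr, sum_Qif (by omega), ← EO (k := k) (by omega)]
          obtain ⟨h1, h2⟩ := Qc_end k
          rw [h1, h2]
          ring
        have hne : r - q ≠ 0 := by
          rw [hrq]
          have := Fq_ne (2 * k)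
          positivity
        have := Submodule.smul_mem I (r - q)⁻¹ hmem
        rwa [smul_smul, inv_mul_cancel₀ hne, one_smul] at this
    refine Submodule.span_le.mpr ?_
    rintro x ⟨a, y, ⟨m, n, rfl⟩, rfl⟩
    exact hI _ _ (gz_mem_of_g1 hI (fun l _ => hg1 l) m n le_rfl)
end

section
/- The multiple zeta value identity 4 ζ(2,2) = 3 ζ(4) holds, where ζ(2,2) = Σ_{0<m<n} 1/(m² n²) and ζ(4) = Σ_{n>0} 1/n⁴. -/
open Real

set_option maxHeartbeats 1000000 in
/-- The multiple zeta value identity `4ζ(2,2) = 3ζ(4)`. -/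
theorem four_zeta22_eq_three_zeta4 :
    4 * (∑' p : ℕ × ℕ,
        if 0 < p.1 ∧ p.1 < p.2 then (1 : ℝ) / ((p.1 : ℝ) ^ 2 * (p.2 : ℝ) ^ 2) else 0) =
      3 * ∑' n : ℕ, (1 : ℝ) / ((n : ℝ) + 1) ^ 4 := by
  -- basic pieces
  have hz2 : HasSum (fun n : ℕ => (1 : ℝ) / (n : ℝ) ^ 2) (π ^ 2 / 6) := hasSum_zeta_two
  have hz4 : HasSum (fun n : ℕ => (1 : ℝ) / (n : ℝ) ^ 4) (π ^ 4 / 90) := hasSum_zeta_four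
  -- shifted zeta(4)
  have hz4' : HasSum (fun n : ℕ => (1 : ℝ) / ((n : ℝ) + 1) ^ 4) (π ^ 4 / 90) := by
    have h := (hasSum_nat_add_iff' (f := fun n : ℕ => (1 : ℝ) / (n : ℝ) ^ 4) 1).mpr hz4
    have e : ∀ n : ℕ, (1 : ℝ) / ((n + 1 : ℕ) : ℝ) ^ 4 = (1 : ℝ) / ((n : ℝ) + 1) ^ 4 := by
      intro n; push_cast; ring_nf
    simp only [e] at h
    simpa using h
  set g : ℕ × ℕ → ℝ := fun p => (1 / (p.1 : ℝ) ^ 2) * (1 / (p.2 : ℝ) ^ 2) with hgdef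
  have hgs : Summable g :=
    hz2.summable.mul_of_nonneg hz2.summable (fun n => by positivity) (fun n => by positivity)
  have hgsum : ∑' p, g p = (π ^ 2 / 6) * (π ^ 2 / 6) := by
    have hnorm : Summable fun n : ℕ => ‖(1 : ℝ) / (n:ℝ)^2‖ := by
      have : ∀ n : ℕ, ‖(1 : ℝ) / (n:ℝ)^2‖ = 1 / (n:ℝ)^2 := fun n => by
        rw [Real.norm_eq_abs, abs_of_nonneg (by positivity)]
      simpa [this] using hz2.summable
    have h := tsum_mul_tsum_of_summable_norm (R := ℝ)
      (f := fun n : ℕ => (1 : ℝ) / (n:ℝ)^2) (g := fun n : ℕ => (1 : ℝ) / (n:ℝ)^2) hnorm hnorm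
    rw [hz2.tsum_eq] at h
    exact h.symm
  set A : ℕ × ℕ → ℝ := fun p =>
    if 0 < p.1 ∧ p.1 < p.2 then (1 : ℝ) / ((p.1 : ℝ) ^ 2 * (p.2 : ℝ) ^ 2) else 0 with hA
  set B : ℕ × ℕ → ℝ := fun p =>
    if 0 < p.2 ∧ p.2 < p.1 then (1 : ℝ) / ((p.1 : ℝ) ^ 2 * (p.2 : ℝ) ^ 2) else 0 with hB
  set C : ℕ × ℕ → ℝ := fun p =>
    if 0 < p.1 ∧ p.1 = p.2 then (1 : ℝ) / ((p.1 : ℝ) ^ 2 * (p.2 : ℝ) ^ 2) else 0 with hC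
  have hsplit : ∀ p, g p = A p + B p + C p := by
    rintro ⟨m, n⟩
    simp only [hgdef, hA, hB, hC]
    rcases Nat.eq_zero_or_pos m with hm | hm
    · subst hm; simp
    rcases Nat.eq_zero_or_pos n with hn | hn
    · subst hn
      rw [if_neg (by omega), if_neg (by omega), if_neg (by omega)]
      simp
    rcases lt_trichotomy m n with h | h | h
    · rw [if_pos ⟨hm, h⟩, if_neg (by omega), if_neg (by omega)]
      field_simp
      ring
    · rw [if_neg (by omega), if_neg (by omega), if_pos ⟨hm, h⟩]
      field_simp
      ring
    · rw [if_neg (by omega), if_pos ⟨hn, h⟩, if_neg (by omega)]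
      field_simp
      ring
  -- nonnegativity & summability of pieces
  have hAle : ∀ p, A p ≤ g p := by
    intro p; rw [hsplit p]
    linarith [show (0:ℝ) ≤ B p by simp only [hB]; positivity,
      show (0:ℝ) ≤ C p by simp only [hC]; positivity]
  have hBle : ∀ p, B p ≤ g p := by
    intro p; rw [hsplit p]
    linarith [show (0:ℝ) ≤ A p by simp only [hA]; positivity,
      show (0:ℝ) ≤ C p by simp only [hC]; positivity]
  have hCle : ∀ p, C p ≤ g p := by
    intro p; rw [hsplit p]
    linarith [show (0:ℝ) ≤ A p by simp only [hA]; positivity,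
      show (0:ℝ) ≤ B p by simp only [hB]; positivity]
  have hAs : Summable A := Summable.of_nonneg_of_le (fun p => by simp only [hA]; positivity) hAle hgs
  have hBs : Summable B := Summable.of_nonneg_of_le (fun p => by simp only [hB]; positivity) hBle hgs
  have hCs : Summable C := Summable.of_nonneg_of_le (fun p => by simp only [hC]; positivity) hCle hgs
  -- B sums to the same as A
  have hBA : ∑' p, B p = ∑' p, A p := by
    rw [← (Equiv.prodComm ℕ ℕ).tsum_eq B]
    congr 1
    ext p
    simp only [hA, hB, Equiv.prodComm_apply, Prod.fst_swap, Prod.snd_swap]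
    rcases eq_or_ne (0 < p.1 ∧ p.1 < p.2) True with _ | _ <;>
      · by_cases h : 0 < p.1 ∧ p.1 < p.2
        · rw [if_pos h, if_pos h]; ring_nf
        · rw [if_neg h, if_neg h]
  -- C sums to zeta(4)
  have hCsum : ∑' p, C p = π ^ 4 / 90 := by
    have hinj : Function.Injective (fun n : ℕ => ((n + 1 : ℕ), (n + 1 : ℕ))) := by
      intro a b h; simpa using h
    have hC0 : ∀ p ∉ Set.range (fun n : ℕ => ((n + 1 : ℕ), (n + 1 : ℕ))), C p = 0 := by
      rintro ⟨m, n⟩ hp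
      simp only [hC]
      rw [if_neg]
      rintro ⟨hm, rfl⟩
      have hm1 : m - 1 + 1 = m := by omega
      exact hp ⟨m - 1, by simp [hm1]⟩
    have hC0' : Function.support C ⊆ Set.range (fun n : ℕ => ((n + 1 : ℕ), (n + 1 : ℕ))) := by
      intro p hp
      by_contra hcon
      exact hp (hC0 p hcon)
    rw [← hinj.tsum_eq hC0']
    have : (fun n : ℕ => C ((n+1 : ℕ), (n+1 : ℕ))) = fun n : ℕ => (1:ℝ) / ((n:ℝ)+1)^4 := by
      ext n
      rw [hC]
      simp only
      rw [if_pos (show 0 < n + 1 ∧ True from ⟨Nat.succ_pos n, trivial⟩)]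
      push_cast; ring_nf
    rw [this, hz4'.tsum_eq]
  -- combine
  have hgeq : (π ^ 2 / 6) * (π ^ 2 / 6) = ∑' p, A p + ∑' p, B p + ∑' p, C p := by
    rw [← hgsum, tsum_congr hsplit, Summable.tsum_add (hAs.add hBs) hCs, Summable.tsum_add hAs hBs]
  rw [hBA, hCsum] at hgeq
  rw [hz4'.tsum_eq]
  nlinarith [hgeq, sq_nonneg π]
end
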